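/- (Smooth version of Proposition 3.6: invariance of the limiting functional under an infinitesimal change of framed geodesic.) Let n ≥ 2, L > 0, and let ℛ, ℛ̃ : [−L,L] → ℝ^{n⁴} be continuous 4-tensor fields such that ℛ̃(x₁) has the curvature symmetries for every x₁. Let (ŵ, ŷ, Ẑ, β̂) and (w̌, y̌, Ž, β̌) be two smooth data tuples as in the definition of 𝓘. Suppose there exist smooth maps J : (−L,L) → ℝⁿ and B : (−L,L) → ℝ^{n×n} with B(x₁) skew-symmetric for every x₁, such that: J₁ ≡ 0; B(x₁)e₁ = ∂_{x₁}J(x₁); (∂_{x₁}B)_{ab}(x₁) = −Σ_{k=1}^n ℛ̃_{abk1}(x₁) J_k(x₁) for all a, b; and for all j, l ∈ {2,…,n} and all (x₁,x') ∈ Ω: (i) Ẑ_{jl} = Ž_{jl} + B_{jl}; (ii) ŷ = y̌ + (J₂,…,Jₙ); (iii) ∂_{x₁}ŵ(x₁) + 𝒯^{ℛ̃(x₁)}(ŷ(x₁))₁₁ = ∂_{x₁}w̌(x₁) + 𝒯^{ℛ̃(x₁)}(y̌(x₁))₁₁ + ½(Â² − Ǎ²)₁₁(x₁); (iv) ∂_{x_j}β̂₁(x₁,x')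 + 2𝒯^{ℛ̃(x₁)}(ŷ(x₁)+x')_{1j} = ∂_{x_j}β̌₁(x₁,x') + 2𝒯^{ℛ̃(x₁)}(y̌(x₁)+x')_{1j} + Σ_{l=2}^n ∂_{x₁}(Ž − Ẑ)_{jl}(x₁) x'_l + (Â² − Ǎ²)_{1j}(x₁); (v) (sym ∇'β̂')_{jl}(x₁,x') + 𝒯^{ℛ̃(x₁)}(ŷ(x₁)+x')_{jl} = (sym ∇'β̌')_{jl}(x₁,x') + 𝒯^{ℛ̃(x₁)}(y̌(x₁)+x')_{jl} + ½(Â² − Ǎ²)_{jl}(x₁), where Â and Ǎ are the skew-symmetric matrix fields built from (ŷ, Ẑ) and (y̌, Ž) respectively. Then 𝓘(ŵ, ŷ, Ẑ, β̂) = 𝓘(w̌, y̌, Ž, β̌). -/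

import Mathlib

open MeasureTheory Set

noncomputable section

/-- A 4-tensor has the curvature symmetries. -/
def CurvSymm {N : ℕ} (A : Fin N → Fin N → Fin N → Fin N → ℝ) : Prop :=
  (∀ i j k l, A i j k l = - A j i k l) ∧
  (∀ i j k l, A i j k l = - A i j l k) ∧
  (∀ i j k l, A i j k l = A k l i j) ∧
  (∀ i j k l, A i j k l + A i k l j + A i l j k = 0)

/-- The matrix `𝒯^𝒜(x')`.  The ambient dimension is `n = m+1`; the index
`0 : Fin (m+1)` plays the role of the index `1` of the paper and `i.succ`
plays the role of a primed index `i ∈ {2,…,n}`. -/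
def Tmat {m : ℕ} (A : Fin (m+1) → Fin (m+1) → Fin (m+1) → Fin (m+1) → ℝ)
    (x : EuclideanSpace ℝ (Fin m)) : Fin (m+1) → Fin (m+1) → ℝ := fun i j =>
  Fin.cases (motive := fun _ => ℝ)
    (Fin.cases (motive := fun _ => ℝ)
      (-(1/2) * ∑ k, ∑ l, A 0 k.succ 0 l.succ * x k * x l)
      (fun j' => -(1/3) * ∑ k, ∑ l, A j'.succ k.succ 0 l.succ * x k * x l) j)
    (fun i' =>
      Fin.cases (motive := fun _ => ℝ)
        (-(1/3) * ∑ k, ∑ l, A 0 k.succ i'.succ l.succ * x k * x l)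
        (fun j' => -(1/6) * ∑ k, ∑ l, A j'.succ k.succ i'.succ l.succ * x k * x l) j) i

/-- The skew-symmetric matrix field `A(x₁)` built from `y` and `Z`. -/
def Amat {m : ℕ} (y : ℝ → EuclideanSpace ℝ (Fin m)) (Z : ℝ → Fin m → Fin m → ℝ)
    (t : ℝ) : Fin (m+1) → Fin (m+1) → ℝ := fun i j =>
  Fin.cases (motive := fun _ => ℝ)
    (Fin.cases (motive := fun _ => ℝ) 0 (fun j' => - deriv (fun s => y s j') t) j)
    (fun i' =>
      Fin.cases (motive := fun _ => ℝ) (deriv (fun s => y s i') t) (fun j' => Z t i' j') j) i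

/-- The partial derivative `∂_{x_j} β_i` in the `j`-th primed coordinate direction. -/
def pd {m : ℕ} (β : ℝ × EuclideanSpace ℝ (Fin m) → Fin (m+1) → ℝ) (i : Fin (m+1)) (j : Fin m)
    (x : ℝ × EuclideanSpace ℝ (Fin m)) : ℝ :=
  fderiv ℝ (fun p => β p i) x ((0 : ℝ), EuclideanSpace.single j (1 : ℝ))

/-- The matrix field `G`. -/
def Gmat {m : ℕ} (w : ℝ → ℝ) (y : ℝ → EuclideanSpace ℝ (Fin m)) (Z : ℝ → Fin m → Fin m → ℝ)
    (β : ℝ × EuclideanSpace ℝ (Fin m) → Fin (m+1) → ℝ) (x₁ : ℝ)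
    (x' : EuclideanSpace ℝ (Fin m)) : Fin (m+1) → Fin (m+1) → ℝ := fun i j =>
  (Fin.cases (motive := fun _ => ℝ)
      ((if i = 0 then deriv w x₁ else 0) +
        ∑ l, deriv (fun t => Amat y Z t i l.succ) x₁ * x' l)
      (fun j' => pd β i j' (x₁, x')) j)
    - (1/2) * ∑ k, Amat y Z x₁ i k * Amat y Z x₁ k j

/-- Symmetric part of a matrix. -/
def symPart {N : ℕ} (M : Fin N → Fin N → ℝ) : Fin N → Fin N → ℝ := fun i j =>
  (M i j + M j i) / 2

/-- Squared Frobenius norm. -/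
def fro2 {N : ℕ} (M : Fin N → Fin N → ℝ) : ℝ := ∑ i, ∑ j, (M i j) ^ 2

/-- Square of a matrix. -/
def matSq {N : ℕ} (M : Fin N → Fin N → ℝ) : Fin N → Fin N → ℝ := fun i j =>
  ∑ k, M i k * M k j

/-- The limiting functional `𝓘`. -/
def Ifun {m : ℕ} (L : ℝ)
    (R Rt : ℝ → Fin (m+1) → Fin (m+1) → Fin (m+1) → Fin (m+1) → ℝ)
    (w : ℝ → ℝ) (y : ℝ → EuclideanSpace ℝ (Fin m)) (Z : ℝ → Fin m → Fin m → ℝ)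
    (β : ℝ × EuclideanSpace ℝ (Fin m) → Fin (m+1) → ℝ) : ℝ :=
  ⨍ x₁ in Ioo (-L) L, ⨍ x' in Metric.ball (0 : EuclideanSpace ℝ (Fin m)) 1,
    fro2 (fun i j =>
      symPart (Gmat w y Z β x₁ x') i j
        - (Tmat (R x₁) x' i j - Tmat (Rt x₁) (y x₁ + x') i j))


lemma amat_skew {m : ℕ} (y : ℝ → EuclideanSpace ℝ (Fin m)) (Z : ℝ → Fin m → Fin m → ℝ)
    (t : ℝ) (hZ : ∀ i j, Z t j i = - Z t i j) (i j : Fin (m+1)) :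
    Amat y Z t j i = - Amat y Z t i j := by
  rcases Fin.eq_zero_or_eq_succ i with rfl | ⟨i', rfl⟩ <;>
    rcases Fin.eq_zero_or_eq_succ j with rfl | ⟨j', rfl⟩ <;>
    simp [Amat]
  exact hZ _ _

lemma matSq_skew_symm {N : ℕ} (A : Fin N → Fin N → ℝ) (hA : ∀ i j, A j i = - A i j)
    (i j : Fin N) : matSq A j i = matSq A i j := by
  unfold matSq
  refine Finset.sum_congr rfl fun k _ => ?_
  rw [hA k j, hA i k]; ring

/-- (Smooth version of Proposition 3.6: invariance of the
limiting functional under an infinitesimal change of framed geodesic.) -/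
theorem Ifun_invariance (m : ℕ) (hm : 1 ≤ m) (L : ℝ) (hL : 0 < L)
    (R Rt : ℝ → Fin (m+1) → Fin (m+1) → Fin (m+1) → Fin (m+1) → ℝ)
    (hRcont : ContinuousOn R (Icc (-L) L)) (hRtcont : ContinuousOn Rt (Icc (-L) L))
    (hRtsymm : ∀ x₁ ∈ Icc (-L) L, CurvSymm (Rt x₁))
    -- the two smooth data tuples
    (wh wc : ℝ → ℝ) (yh yc : ℝ → EuclideanSpace ℝ (Fin m))
    (Zh Zc : ℝ → Fin m → Fin m → ℝ)
    (bh bc : ℝ × EuclideanSpace ℝ (Fin m) → Fin (m+1) → ℝ)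
    (hwh : ContDiffOn ℝ (⊤ : ℕ∞) wh (Ioo (-L) L))
    (hwc : ContDiffOn ℝ (⊤ : ℕ∞) wc (Ioo (-L) L))
    (hyh : ContDiffOn ℝ (⊤ : ℕ∞) yh (Ioo (-L) L))
    (hyc : ContDiffOn ℝ (⊤ : ℕ∞) yc (Ioo (-L) L))
    (hZh : ContDiffOn ℝ (⊤ : ℕ∞) Zh (Ioo (-L) L))
    (hZc : ContDiffOn ℝ (⊤ : ℕ∞) Zc (Ioo (-L) L))
    (hZhskew : ∀ x₁ ∈ Ioo (-L) L, ∀ i j, Zh x₁ j i = - Zh x₁ i j)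
    (hZcskew : ∀ x₁ ∈ Ioo (-L) L, ∀ i j, Zc x₁ j i = - Zc x₁ i j)
    (hbh : ContDiffOn ℝ (⊤ : ℕ∞) bh
      (Ioo (-L) L ×ˢ Metric.ball (0 : EuclideanSpace ℝ (Fin m)) 1))
    (hbc : ContDiffOn ℝ (⊤ : ℕ∞) bc
      (Ioo (-L) L ×ˢ Metric.ball (0 : EuclideanSpace ℝ (Fin m)) 1))
    -- the infinitesimal change of framed geodesic
    (Jf : ℝ → Fin (m+1) → ℝ) (B : ℝ → Fin (m+1) → Fin (m+1) → ℝ)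
    (hJsmooth : ContDiffOn ℝ (⊤ : ℕ∞) Jf (Ioo (-L) L))
    (hBsmooth : ContDiffOn ℝ (⊤ : ℕ∞) B (Ioo (-L) L))
    (hBskew : ∀ x₁ ∈ Ioo (-L) L, ∀ a b, B x₁ b a = - B x₁ a b)
    (hJ1 : ∀ x₁ ∈ Ioo (-L) L, Jf x₁ 0 = 0)
    (hBe1 : ∀ x₁ ∈ Ioo (-L) L, ∀ a, B x₁ a 0 = deriv (fun s => Jf s a) x₁)
    (hBode : ∀ x₁ ∈ Ioo (-L) L, ∀ a b,
      deriv (fun s => B s a b) x₁ = - ∑ k, Rt x₁ a b k 0 * Jf x₁ k)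
    -- conditions (i)–(v)
    (hi : ∀ x₁ ∈ Ioo (-L) L, ∀ j l : Fin m, Zh x₁ j l = Zc x₁ j l + B x₁ j.succ l.succ)
    (hii : ∀ x₁ ∈ Ioo (-L) L, ∀ j : Fin m, yh x₁ j = yc x₁ j + Jf x₁ j.succ)
    (hiii : ∀ x₁ ∈ Ioo (-L) L,
      deriv wh x₁ + Tmat (Rt x₁) (yh x₁) 0 0
        = deriv wc x₁ + Tmat (Rt x₁) (yc x₁) 0 0
          + (1/2) * (matSq (Amat yh Zh x₁) 0 0 - matSq (Amat yc Zc x₁) 0 0))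
    (hiv : ∀ x₁ ∈ Ioo (-L) L, ∀ x' ∈ Metric.ball (0 : EuclideanSpace ℝ (Fin m)) 1,
      ∀ j : Fin m,
      pd bh 0 j (x₁, x') + 2 * Tmat (Rt x₁) (yh x₁ + x') 0 j.succ
        = pd bc 0 j (x₁, x') + 2 * Tmat (Rt x₁) (yc x₁ + x') 0 j.succ
          + (∑ l, deriv (fun s => Zc s j l - Zh s j l) x₁ * x' l)
          + (matSq (Amat yh Zh x₁) 0 j.succ - matSq (Amat yc Zc x₁) 0 j.succ))
    (hv : ∀ x₁ ∈ Ioo (-L) L, ∀ x' ∈ Metric.ball (0 : EuclideanSpace ℝ (Fin m)) 1,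
      ∀ j l : Fin m,
      (pd bh j.succ l (x₁, x') + pd bh l.succ j (x₁, x')) / 2
          + Tmat (Rt x₁) (yh x₁ + x') j.succ l.succ
        = (pd bc j.succ l (x₁, x') + pd bc l.succ j (x₁, x')) / 2
          + Tmat (Rt x₁) (yc x₁ + x') j.succ l.succ
          + (1/2) * (matSq (Amat yh Zh x₁) j.succ l.succ
              - matSq (Amat yc Zc x₁) j.succ l.succ)) :
    Ifun L R Rt wh yh Zh bh = Ifun L R Rt wc yc Zc bc := by
  unfold Ifun
  refine average_congr ?_
  filter_upwards [self_mem_ae_restrict measurableSet_Ioo] with x₁ hx₁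
  refine average_congr ?_
  filter_upwards [self_mem_ae_restrict measurableSet_ball] with x' hx'
  have hx₁' : Ioo (-L) L ∈ nhds x₁ := isOpen_Ioo.mem_nhds hx₁
  obtain ⟨hs1, hs2, hs3, hs4⟩ := hRtsymm x₁ (Ioo_subset_Icc_self hx₁)
  have htop : (1 : WithTop ℕ∞) ≤ ((⊤ : ℕ∞) : WithTop ℕ∞) := by exact_mod_cast le_top
  have h2top : (1 : WithTop ℕ∞) + 1 ≤ ((⊤ : ℕ∞) : WithTop ℕ∞) := by decide
  -- differentiability helpers
  have hJD : ∀ t ∈ Ioo (-L) L, ∀ a : Fin (m+1),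
      DifferentiableAt ℝ (fun s => Jf s a) t := by
    intro t ht a
    exact differentiableAt_pi.mp
      ((hJsmooth.differentiableOn (zero_lt_one.trans_le htop).ne').differentiableAt (isOpen_Ioo.mem_nhds ht)) a
  have hycD : ∀ t ∈ Ioo (-L) L, ∀ l : Fin m,
      DifferentiableAt ℝ (fun s => yc s l) t := by
    intro t ht l
    have h := (hyc.differentiableOn (zero_lt_one.trans_le htop).ne').differentiableAt (isOpen_Ioo.mem_nhds ht)
    exact ((EuclideanSpace.proj l :
      EuclideanSpace ℝ (Fin m) →L[ℝ] ℝ).differentiableAt).comp t h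
  have hZD : ∀ (F : ℝ → Fin m → Fin m → ℝ), ContDiffOn ℝ (⊤ : ℕ∞) F (Ioo (-L) L) →
      ∀ j l : Fin m, DifferentiableAt ℝ (fun s => F s j l) x₁ := by
    intro F hF j l
    have h := (hF.differentiableOn (zero_lt_one.trans_le htop).ne').differentiableAt hx₁'
    exact differentiableAt_pi.mp (differentiableAt_pi.mp h j) l
  have hBD : ∀ a b : Fin (m+1), DifferentiableAt ℝ (fun s => B s a b) x₁ := by
    intro a b
    have h := (hBsmooth.differentiableOn (zero_lt_one.trans_le htop).ne').differentiableAt hx₁'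
    exact differentiableAt_pi.mp (differentiableAt_pi.mp h a) b
  have hyc2 : ∀ l : Fin m,
      DifferentiableAt ℝ (fun t => deriv (fun s => yc s l) t) x₁ := by
    intro l
    have h1 : ContDiffOn ℝ ((⊤ : ℕ∞) : WithTop ℕ∞) (fun s => yc s l) (Ioo (-L) L) :=
      (EuclideanSpace.proj l :
        EuclideanSpace ℝ (Fin m) →L[ℝ] ℝ).contDiff.comp_contDiffOn hyc
    have h2 : ContDiffOn ℝ 1 (deriv (fun s => yc s l)) (Ioo (-L) L) :=
      h1.deriv_of_isOpen isOpen_Ioo h2top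
    exact (h2.differentiableOn one_ne_zero).differentiableAt hx₁'
  -- the key second-derivative computation
  have hdA : ∀ l : Fin m,
      deriv (fun t => Amat yh Zh t 0 l.succ) x₁
        = deriv (fun t => Amat yc Zc t 0 l.succ) x₁
          + ∑ k, Rt x₁ l.succ 0 k 0 * Jf x₁ k := by
    intro l
    have e1 : (fun t => Amat yh Zh t 0 l.succ)
        = fun t => -(deriv (fun s => yh s l) t) := by
      funext t; simp [Amat]
    have e2 : (fun t => Amat yc Zc t 0 l.succ)
        = fun t => -(deriv (fun s => yc s l) t) := by
      funext t; simp [Amat]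
    rw [e1, e2, deriv.fun_neg, deriv.fun_neg]
    have hev : (fun t => deriv (fun s => yh s l) t)
        =ᶠ[nhds x₁] (fun t => deriv (fun s => yc s l) t + B t l.succ 0) := by
      filter_upwards [hx₁'] with t ht
      have heq : (fun s => yh s l) =ᶠ[nhds t] (fun s => yc s l + Jf s l.succ) := by
        filter_upwards [isOpen_Ioo.mem_nhds ht] with s hs
        exact hii s hs l
      rw [heq.deriv_eq, deriv_fun_add (hycD t ht l) (hJD t ht l.succ), hBe1 t ht l.succ]
    rw [hev.deriv_eq, deriv_fun_add (hyc2 l) (hBD l.succ 0), hBode x₁ hx₁ l.succ 0]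
    ring
  -- skewness facts
  have hAh : ∀ i j, Amat yh Zh x₁ j i = - Amat yh Zh x₁ i j :=
    amat_skew yh Zh x₁ (hZhskew x₁ hx₁)
  have hAc : ∀ i j, Amat yc Zc x₁ j i = - Amat yc Zc x₁ i j :=
    amat_skew yc Zc x₁ (hZcskew x₁ hx₁)
  have mSh : ∀ i j, matSq (Amat yh Zh x₁) j i = matSq (Amat yh Zh x₁) i j :=
    matSq_skew_symm _ hAh
  have mSc : ∀ i j, matSq (Amat yc Zc x₁) j i = matSq (Amat yc Zc x₁) i j :=
    matSq_skew_symm _ hAc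
  -- curvature index identities
  have hE : ∀ a b : Fin (m+1), Rt x₁ 0 a 0 b = Rt x₁ 0 b 0 a := fun a b => hs3 0 a 0 b
  have hE2 : ∀ a b : Fin (m+1), Rt x₁ a 0 b 0 = Rt x₁ 0 b 0 a := by
    intro a b
    have h1 := hs1 a 0 b 0
    have h2 := hs2 0 a b 0
    have h3 := hs3 0 a 0 b
    linarith
  -- bilinear-sum manipulations
  have hswap : ∀ p q : Fin m → ℝ,
      (∑ k, ∑ l, Rt x₁ 0 k.succ 0 l.succ * p k * q l)
        = ∑ k, ∑ l, Rt x₁ 0 k.succ 0 l.succ * q k * p l := by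
    intro p q
    rw [Finset.sum_comm]
    refine Finset.sum_congr rfl fun k _ => Finset.sum_congr rfl fun l _ => ?_
    rw [hE l.succ k.succ]; ring
  have hexp : ∀ p q : Fin m → ℝ,
      (∑ k, ∑ l, Rt x₁ 0 k.succ 0 l.succ * (p k + q k) * (p l + q l))
        = (∑ k, ∑ l, Rt x₁ 0 k.succ 0 l.succ * p k * p l)
          + 2 * (∑ k, ∑ l, Rt x₁ 0 k.succ 0 l.succ * q k * p l)
          + (∑ k, ∑ l, Rt x₁ 0 k.succ 0 l.succ * q k * q l) := by
    intro p q
    have h4 : (∑ k, ∑ l, Rt x₁ 0 k.succ 0 l.succ * (p k + q k) * (p l + q l))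
        = (∑ k, ∑ l, Rt x₁ 0 k.succ 0 l.succ * p k * p l)
          + ((∑ k, ∑ l, Rt x₁ 0 k.succ 0 l.succ * p k * q l)
          + ((∑ k, ∑ l, Rt x₁ 0 k.succ 0 l.succ * q k * p l)
          + (∑ k, ∑ l, Rt x₁ 0 k.succ 0 l.succ * q k * q l))) := by
      rw [← Finset.sum_add_distrib, ← Finset.sum_add_distrib, ← Finset.sum_add_distrib]
      refine Finset.sum_congr rfl fun k _ => ?_
      rw [← Finset.sum_add_distrib, ← Finset.sum_add_distrib, ← Finset.sum_add_distrib]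
      refine Finset.sum_congr rfl fun l _ => ?_
      ring
    rw [h4, hswap p q]; ring
  have hT00add : ∀ z : EuclideanSpace ℝ (Fin m),
      Tmat (Rt x₁) (z + x') 0 0
        = Tmat (Rt x₁) z 0 0
          - (∑ k, ∑ l, Rt x₁ 0 k.succ 0 l.succ * x' k * z l)
          - (1/2) * (∑ k, ∑ l, Rt x₁ 0 k.succ 0 l.succ * x' k * x' l) := by
    intro z
    simp only [Tmat, Fin.cases_zero, PiLp.add_apply]
    rw [hexp (fun k => z k) (fun k => x' k)]
    ring
  have hDsum : (∑ l : Fin m, (∑ k : Fin (m+1), Rt x₁ l.succ 0 k 0 * Jf x₁ k) * x' l)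
      = ∑ k : Fin m, ∑ l : Fin m, Rt x₁ 0 k.succ 0 l.succ * Jf x₁ k.succ * x' l := by
    have hstep : ∀ l : Fin m,
        (∑ k : Fin (m+1), Rt x₁ l.succ 0 k 0 * Jf x₁ k) * x' l
          = ∑ k : Fin m, Rt x₁ 0 k.succ 0 l.succ * Jf x₁ k.succ * x' l := by
      intro l
      rw [Finset.sum_mul, Fin.sum_univ_succ, hJ1 x₁ hx₁]
      simp only [mul_zero, zero_mul, zero_add]
      refine Finset.sum_congr rfl fun k _ => ?_
      rw [hE2 l.succ k.succ]
    rw [Finset.sum_congr rfl fun l _ => hstep l, Finset.sum_comm]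
  -- entries of G
  have hG00 : ∀ (w : ℝ → ℝ) (y : ℝ → EuclideanSpace ℝ (Fin m))
      (Z : ℝ → Fin m → Fin m → ℝ) (βf : ℝ × EuclideanSpace ℝ (Fin m) → Fin (m+1) → ℝ),
      Gmat w y Z βf x₁ x' 0 0
        = deriv w x₁ + (∑ l, deriv (fun t => Amat y Z t 0 l.succ) x₁ * x' l)
          - (1/2) * matSq (Amat y Z x₁) 0 0 := by
    intro w y Z βf
    simp [Gmat, matSq]
  have hG0s : ∀ (w : ℝ → ℝ) (y : ℝ → EuclideanSpace ℝ (Fin m))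
      (Z : ℝ → Fin m → Fin m → ℝ) (βf : ℝ × EuclideanSpace ℝ (Fin m) → Fin (m+1) → ℝ)
      (j : Fin m),
      Gmat w y Z βf x₁ x' 0 j.succ
        = pd βf 0 j (x₁, x') - (1/2) * matSq (Amat y Z x₁) 0 j.succ := by
    intro w y Z βf j
    simp [Gmat, matSq]
  have eAs : ∀ (y : ℝ → EuclideanSpace ℝ (Fin m)) (Z : ℝ → Fin m → Fin m → ℝ)
      (j l : Fin m), (fun t => Amat y Z t j.succ l.succ) = fun t => Z t j l := by
    intro y Z j l; funext t; simp [Amat]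
  have hGs0 : ∀ (w : ℝ → ℝ) (y : ℝ → EuclideanSpace ℝ (Fin m))
      (Z : ℝ → Fin m → Fin m → ℝ) (βf : ℝ × EuclideanSpace ℝ (Fin m) → Fin (m+1) → ℝ)
      (j : Fin m),
      Gmat w y Z βf x₁ x' j.succ 0
        = (∑ l, deriv (fun t => Z t j l) x₁ * x' l)
          - (1/2) * matSq (Amat y Z x₁) j.succ 0 := by
    intro w y Z βf j
    simp only [Gmat, Fin.cases_zero, Fin.succ_ne_zero, if_false, matSq, eAs, zero_add]
  have hGss : ∀ (w : ℝ → ℝ) (y : ℝ → EuclideanSpace ℝ (Fin m))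
      (Z : ℝ → Fin m → Fin m → ℝ) (βf : ℝ × EuclideanSpace ℝ (Fin m) → Fin (m+1) → ℝ)
      (j l : Fin m),
      Gmat w y Z βf x₁ x' j.succ l.succ
        = pd βf j.succ l (x₁, x') - (1/2) * matSq (Amat y Z x₁) j.succ l.succ := by
    intro w y Z βf j l
    simp [Gmat, matSq]
  -- T-symmetry for the (succ, 0) entries
  have hTsym : ∀ (z : EuclideanSpace ℝ (Fin m)) (j : Fin m),
      Tmat (Rt x₁) z j.succ 0 = Tmat (Rt x₁) z 0 j.succ := by
    intro z j
    simp only [Tmat, Fin.cases_zero, Fin.cases_succ]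
    have h : (∑ k, ∑ l, Rt x₁ 0 k.succ j.succ l.succ * z k * z l)
        = ∑ k, ∑ l, Rt x₁ j.succ k.succ 0 l.succ * z k * z l := by
      rw [Finset.sum_comm]
      refine Finset.sum_congr rfl fun k _ => Finset.sum_congr rfl fun l _ => ?_
      rw [hs3 0 l.succ j.succ k.succ]; ring
    rw [h]
  -- entry (0,0)
  have key00 : symPart (Gmat wh yh Zh bh x₁ x') 0 0 + Tmat (Rt x₁) (yh x₁ + x') 0 0
      = symPart (Gmat wc yc Zc bc x₁ x') 0 0 + Tmat (Rt x₁) (yc x₁ + x') 0 0 := by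
    have hsymh : symPart (Gmat wh yh Zh bh x₁ x') 0 0 = Gmat wh yh Zh bh x₁ x' 0 0 := by
      unfold symPart; ring
    have hsymc : symPart (Gmat wc yc Zc bc x₁ x') 0 0 = Gmat wc yc Zc bc x₁ x' 0 0 := by
      unfold symPart; ring
    have hsum : (∑ l, deriv (fun t => Amat yh Zh t 0 l.succ) x₁ * x' l)
        = (∑ l, deriv (fun t => Amat yc Zc t 0 l.succ) x₁ * x' l)
          + ∑ l, (∑ k, Rt x₁ l.succ 0 k 0 * Jf x₁ k) * x' l := by
      rw [← Finset.sum_add_distrib]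
      refine Finset.sum_congr rfl fun l _ => ?_
      rw [hdA l]; ring
    have h3 := hiii x₁ hx₁
    have hTh := hT00add (yh x₁)
    have hTc := hT00add (yc x₁)
    have hyhsum : (∑ k : Fin m, ∑ l : Fin m, Rt x₁ 0 k.succ 0 l.succ * x' k * (yh x₁) l)
        = (∑ k : Fin m, ∑ l : Fin m, Rt x₁ 0 k.succ 0 l.succ * x' k * (yc x₁) l)
          + (∑ k : Fin m, ∑ l : Fin m, Rt x₁ 0 k.succ 0 l.succ * x' k * Jf x₁ l.succ) := by
      rw [← Finset.sum_add_distrib]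
      refine Finset.sum_congr rfl fun k _ => ?_
      rw [← Finset.sum_add_distrib]
      refine Finset.sum_congr rfl fun l _ => ?_
      rw [hii x₁ hx₁ l]; ring
    have hswapJ := hswap (fun k => x' k) (fun k => Jf x₁ k.succ)
    rw [hsymh, hsymc, hG00 wh yh Zh bh, hG00 wc yc Zc bc]
    linarith [hDsum, hswapJ, hyhsum, h3, hTh, hTc, hsum]
  -- entries (0, j+1)
  have key0s : ∀ j : Fin m,
      symPart (Gmat wh yh Zh bh x₁ x') 0 j.succ + Tmat (Rt x₁) (yh x₁ + x') 0 j.succ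
        = symPart (Gmat wc yc Zc bc x₁ x') 0 j.succ
          + Tmat (Rt x₁) (yc x₁ + x') 0 j.succ := by
    intro j
    have h4 := hiv x₁ hx₁ x' hx' j
    have hZrw : (∑ l, deriv (fun s => Zc s j l - Zh s j l) x₁ * x' l)
        = (∑ l, deriv (fun t => Zc t j l) x₁ * x' l)
          - ∑ l, deriv (fun t => Zh t j l) x₁ * x' l := by
      rw [← Finset.sum_sub_distrib]
      refine Finset.sum_congr rfl fun l _ => ?_
      rw [deriv_fun_sub (hZD Zc hZc j l) (hZD Zh hZh j l)]; ring
    have msh := mSh 0 j.succ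
    have msc := mSc 0 j.succ
    unfold symPart
    rw [hG0s wh yh Zh bh j, hGs0 wh yh Zh bh j, hG0s wc yc Zc bc j, hGs0 wc yc Zc bc j]
    linarith [h4, hZrw, msh, msc]
  -- entries (j+1, l+1)
  have keyss : ∀ j l : Fin m,
      symPart (Gmat wh yh Zh bh x₁ x') j.succ l.succ
          + Tmat (Rt x₁) (yh x₁ + x') j.succ l.succ
        = symPart (Gmat wc yc Zc bc x₁ x') j.succ l.succ
          + Tmat (Rt x₁) (yc x₁ + x') j.succ l.succ := by
    intro j l
    have h5 := hv x₁ hx₁ x' hx' j l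
    unfold symPart
    rw [hGss wh yh Zh bh j l, hGss wh yh Zh bh l j, hGss wc yc Zc bc j l,
      hGss wc yc Zc bc l j]
    linarith [mSh j.succ l.succ, mSc j.succ l.succ]
  -- conclude
  refine congrArg fro2 ?_
  funext i j
  rcases Fin.eq_zero_or_eq_succ i with rfl | ⟨i', rfl⟩ <;>
    rcases Fin.eq_zero_or_eq_succ j with rfl | ⟨j', rfl⟩
  · linarith [key00]
  · linarith [key0s j']
  · have sPh : symPart (Gmat wh yh Zh bh x₁ x') i'.succ 0
        = symPart (Gmat wh yh Zh bh x₁ x') 0 i'.succ := by unfold symPart; ring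
    have sPc : symPart (Gmat wc yc Zc bc x₁ x') i'.succ 0
        = symPart (Gmat wc yc Zc bc x₁ x') 0 i'.succ := by unfold symPart; ring
    have hTRh := hTsym (yh x₁ + x') i'
    have hTRc := hTsym (yc x₁ + x') i'
    have hTR0 := hTsym x' i'
    linarith [key0s i']
  · linarith [keyss i' j']
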